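/- Let a, b, c, d, e, f be integers such that the four triples (a,b,c), (c,d,e), (a,e,f), (b,d,f) are admissible, set b̄ := n−1−b, s := max(0, n−1−2e, (d+f−b)−(d+e−c), (b+f−d)+(c+d−e)−(n−1)) and S := min(c+d−e, a+f−e, n−1−(a+e−f), n−1−(d+e−c)), and let z be an integer with s ≤ z ≤ S. Then [2f; b+d+f+1−n] · [(b+f−d)+(c+d−e)−z; b+f−d] · [(d+e−c)+z; d+f−b] = [2f; b̄+d+f+1−n] · [(b̄+f−d)+(c+d−e)−z; b̄+f−d] · [(d+e−c)+z; d+f−b̄]. -/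

import Mathlib

/-- The quantum number `{a} = ξ^a - ξ^{-a}` where `ξ = exp(πi/n)`. -/
noncomputable def qnum (n : ℕ) (a : ℂ) : ℂ :=
  Complex.exp (Real.pi * Complex.I * a / n) - Complex.exp (-(Real.pi * Complex.I * a) / n)

/-- The quantum factorial `{k}! = ∏_{j=1}^k {j}`. -/
noncomputable def qfact (n k : ℕ) : ℂ :=
  ∏ j ∈ Finset.range k, qnum n (j + 1)

/-- The quantum binomial `[a; a-k] = ∏_{j=0}^{k-1} {a-j}/{a-k-j}` (top entry `a`,
difference of the two entries the natural number `k`), an empty product being `1`. -/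
noncomputable def qbinom (n : ℕ) (a : ℂ) (k : ℕ) : ℂ :=
  ∏ j ∈ Finset.range k, qnum n (a - j) / qnum n ((k : ℂ) - j)

/-- The quantum binomial `[a; b]` for integer entries. -/
noncomputable def qbinomZ (n : ℕ) (a b : ℤ) : ℂ :=
  qbinom n (a : ℂ) (a - b).toNat

/-- A triple of integers `(i,j,k)` is admissible. -/
def Admissible (n : ℕ) (i j k : ℤ) : Prop :=
  0 < i ∧ i < (n : ℤ) - 1 ∧ 0 < j ∧ j < (n : ℤ) - 1 ∧ 0 < k ∧ k < (n : ℤ) - 1 ∧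
  (n : ℤ) - 1 < i + j + k ∧ i + j + k < 2 * ((n : ℤ) - 1) ∧
  0 < i + j - k ∧ i + j - k < (n : ℤ) - 1 ∧
  0 < j + k - i ∧ j + k - i < (n : ℤ) - 1 ∧
  0 < k + i - j ∧ k + i - j < (n : ℤ) - 1

lemma qnum_zero' (n : ℕ) : qnum n 0 = 0 := by simp [qnum]

lemma qnum_symm (n : ℕ) (hn : 0 < n) (a : ℂ) : qnum n ((n:ℂ) - a) = qnum n a := by
  have hn' : (n:ℂ) ≠ 0 := Nat.cast_ne_zero.mpr hn.ne'
  have h1 : (Real.pi : ℂ) * Complex.I * ((n:ℂ) - a) / n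
      = Real.pi * Complex.I + -(Real.pi * Complex.I * a / n) := by field_simp; ring
  have h2 : -((Real.pi : ℂ) * Complex.I * ((n:ℂ) - a)) / n
      = -((Real.pi:ℂ) * Complex.I) + Real.pi * Complex.I * a / n := by field_simp; ring
  have h3 : -((Real.pi:ℂ) * Complex.I * a) / n = -(Real.pi * Complex.I * a / n) := by ring
  unfold qnum
  rw [h1, h2, h3, Complex.exp_add, Complex.exp_add, Complex.exp_neg, Complex.exp_neg,
    Complex.exp_pi_mul_I]
  ring

lemma qnum_n (n : ℕ) (hn : 0 < n) : qnum n (n:ℂ) = 0 := by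
  have := qnum_symm n hn 0
  simpa [qnum_zero'] using this

lemma qnum_nat_ne_zero (n j : ℕ) (h0 : 0 < j) (hj : j < n) : qnum n (j:ℂ) ≠ 0 := by
  have hn' : (n:ℂ) ≠ 0 := Nat.cast_ne_zero.mpr (by omega)
  have hpi : (Real.pi : ℂ) ≠ 0 := by exact_mod_cast Real.pi_ne_zero
  have hI : Complex.I ≠ 0 := Complex.I_ne_zero
  unfold qnum
  rw [sub_ne_zero]
  intro h
  rw [Complex.exp_eq_exp_iff_exists_int] at h
  obtain ⟨k, hk⟩ := h
  field_simp at hk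
  have hj' : (j:ℂ) = (k:ℂ) * n := by
    have h2 : (2*(Real.pi:ℂ)*Complex.I) * j = (2*(Real.pi:ℂ)*Complex.I) * ((k:ℂ)*n) := by
      linear_combination (Real.pi:ℂ) * Complex.I * hk
    exact mul_left_cancel₀ (mul_ne_zero (mul_ne_zero two_ne_zero hpi) hI) h2
  have hjz : (j:ℤ) = k * n := by exact_mod_cast hj'
  rcases le_or_gt k 0 with hc | hc <;> nlinarith [hjz]

lemma qfact_succ (n p : ℕ) : qfact n (p + 1) = qfact n p * qnum n ((p:ℂ) + 1) :=
  Finset.prod_range_succ _ _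

lemma qfact_ne_zero (n k : ℕ) (hk : k < n) : qfact n k ≠ 0 := by
  unfold qfact
  apply Finset.prod_ne_zero_iff.mpr
  intro j hj
  rw [Finset.mem_range] at hj
  have : ((j:ℂ) + 1) = ((j+1 : ℕ) : ℂ) := by push_cast; ring
  rw [this]
  exact qnum_nat_ne_zero n (j+1) (by omega) (by omega)

lemma prod_qnum_eq (n m k : ℕ) (hk : k ≤ m) :
    (∏ j ∈ Finset.range k, qnum n ((m:ℂ) - j)) * qfact n (m - k) = qfact n m := by
  induction k with
  | zero => simp
  | succ k ih =>
    rw [Finset.prod_range_succ]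
    have h : m - k = (m - (k+1)) + 1 := by omega
    have hc : ((m - (k+1) : ℕ) : ℂ) + 1 = (m:ℂ) - k := by
      push_cast [Nat.cast_sub (by omega : k + 1 ≤ m)]; ring
    calc (∏ j ∈ Finset.range k, qnum n ((m:ℂ) - j)) * qnum n ((m:ℂ) - k) * qfact n (m - (k+1))
        = (∏ j ∈ Finset.range k, qnum n ((m:ℂ) - j)) *
            (qfact n (m - (k+1)) * qnum n (((m - (k+1) : ℕ) : ℂ) + 1)) := by rw [hc]; ring
      _ = (∏ j ∈ Finset.range k, qnum n ((m:ℂ) - j)) * qfact n (m - k) := by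
            rw [h, qfact_succ]
      _ = qfact n m := ih (by omega)

lemma qbinom_eq (n m k : ℕ) (hk : k ≤ m) (hm : m < n) :
    qbinom n (m:ℂ) k = qfact n m / (qfact n k * qfact n (m - k)) := by
  unfold qbinom
  rw [Finset.prod_div_distrib]
  have hden : (∏ j ∈ Finset.range k, qnum n ((k:ℂ) - j)) = qfact n k := by
    have := prod_qnum_eq n k k le_rfl
    simpa [qfact] using this
  have hnum := prod_qnum_eq n m k hk
  have hne1 : qfact n (m - k) ≠ 0 := qfact_ne_zero n _ (by omega)
  have hne2 : qfact n k ≠ 0 := qfact_ne_zero n _ (by omega)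
  rw [hden]
  field_simp
  linear_combination hnum

lemma qbinom_eq_zero (n m k : ℕ) (hn : 0 < n) (h1 : n ≤ m) (h2 : m - n < k) :
    qbinom n (m:ℂ) k = 0 := by
  unfold qbinom
  apply Finset.prod_eq_zero (Finset.mem_range.mpr h2)
  have : (m:ℂ) - ((m - n : ℕ):ℂ) = (n:ℂ) := by
    push_cast [Nat.cast_sub h1]; ring
  rw [this, qnum_n n hn, zero_div]

lemma qfact_compl (n : ℕ) (hn : 2 ≤ n) (m : ℕ) (hm : m ≤ n - 1) :
    qfact n m * qfact n (n - 1 - m) = qfact n (n - 1) := by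
  induction m with
  | zero => simp [qfact]
  | succ m ih =>
    have ih' := ih (by omega)
    have h1 : n - 1 - m = (n - 1 - (m+1)) + 1 := by omega
    have hq : qnum n (((n - 1 - (m+1) : ℕ):ℂ) + 1) = qnum n ((m:ℂ) + 1) := by
      have hc : ((n - 1 - (m+1) : ℕ):ℂ) + 1 = (n:ℂ) - ((m:ℂ) + 1) := by
        push_cast [Nat.cast_sub (by omega : m + 1 ≤ n - 1), Nat.cast_sub (by omega : 1 ≤ n)]
        ring
      rw [hc, qnum_symm n (by omega)]
    rw [qfact_succ, ← ih', h1, qfact_succ, hq]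
    ring

lemma qbinomZ_fact (n : ℕ) (a b : ℤ) (hb : 0 ≤ b) (hba : b ≤ a) (ha : a < (n:ℤ)) :
    qbinomZ n a b = qfact n a.toNat / (qfact n (a - b).toNat * qfact n b.toNat) := by
  unfold qbinomZ
  have hc : (a:ℂ) = ((a.toNat : ℕ) : ℂ) := by
    exact_mod_cast (Int.toNat_of_nonneg (le_trans hb hba)).symm
  rw [hc, qbinom_eq n a.toNat (a-b).toNat (by omega) (by omega)]
  have h : a.toNat - (a - b).toNat = b.toNat := by omega
  rw [h]

lemma key_alg (A T U B Cz K3 Dfb K1 P NU NK3 Q : ℂ)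
    (hB : B ≠ 0) (hCz : Cz ≠ 0) (hK3 : K3 ≠ 0) (hDfb : Dfb ≠ 0)
    (hK1 : K1 ≠ 0) (hP : P ≠ 0) (hNU : NU ≠ 0)
    (h1 : U * NU = Q) (h2 : K3 * NK3 = Q) :
    A / (K1 * P) * (U / (Cz * B)) * (T / (K3 * Dfb)) =
    A / (B * Dfb) * (NK3 / (K1 * Cz)) * (T / (NU * P)) := by
  field_simp
  linear_combination A * T * (h1 - h2)

theorem core (n : ℕ) (hn : 2 ≤ n) (b c d e f z : ℤ)
    (i3 : 0 < c + d - e) (i4 : c + d - e < (n:ℤ) - 1)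
    (i5 : 0 < d + e - c) (i6 : d + e - c < (n:ℤ) - 1)
    (k1 : (n:ℤ) - 1 < b + d + f) (k2 : b + d + f < 2 * ((n:ℤ) - 1))
    (k3 : 0 < b + d - f) (k4 : b + d - f < (n:ℤ) - 1)
    (k5 : 0 < d + f - b) (k6 : d + f - b < (n:ℤ) - 1)
    (k7 : 0 < f + b - d) (k8 : f + b - d < (n:ℤ) - 1)
    (hf1 : 0 < f) (hf2 : f < (n:ℤ) - 1)
    (hz1 : 0 ≤ z) (hz3 : (d + f - b) - (d + e - c) ≤ z)
    (hz4 : (b + f - d) + (c + d - e) - ((n:ℤ) - 1) ≤ z)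
    (hz5 : z ≤ c + d - e) (hz8 : z ≤ (n:ℤ) - 1 - (d + e - c)) :
    qbinomZ n (2 * f) (b + d + f + 1 - n) *
      qbinomZ n ((b + f - d) + (c + d - e) - z) (b + f - d) *
      qbinomZ n ((d + e - c) + z) (d + f - b) =
    qbinomZ n (2 * f) (((n : ℤ) - 1 - b) + d + f + 1 - n) *
      qbinomZ n ((((n : ℤ) - 1 - b) + f - d) + (c + d - e) - z)
        (((n : ℤ) - 1 - b) + f - d) *
      qbinomZ n ((d + e - c) + z) (d + f - ((n : ℤ) - 1 - b)) := by
  by_cases hcase : (n:ℤ) ≤ 2 * f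
  · have hL : qbinomZ n (2 * f) (b + d + f + 1 - n) = 0 := by
      unfold qbinomZ
      have hc : ((2 * f : ℤ):ℂ) = (((2 * f).toNat : ℕ) : ℂ) := by
        exact_mod_cast (Int.toNat_of_nonneg (by omega)).symm
      rw [hc]
      exact qbinom_eq_zero n _ _ (by omega) (by omega) (by omega)
    have hR : qbinomZ n (2 * f) (((n : ℤ) - 1 - b) + d + f + 1 - n) = 0 := by
      unfold qbinomZ
      have hc : ((2 * f : ℤ):ℂ) = (((2 * f).toNat : ℕ) : ℂ) := by
        exact_mod_cast (Int.toNat_of_nonneg (by omega)).symm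
      rw [hc]
      exact qbinom_eq_zero n _ _ (by omega) (by omega) (by omega)
    rw [hL, hR, zero_mul, zero_mul, zero_mul, zero_mul]
  · push_neg at hcase
    have hL1 : qbinomZ n (2 * f) (b + d + f + 1 - n)
        = qfact n (2 * f).toNat /
          (qfact n ((n:ℤ) - 1 - b + f - d).toNat * qfact n (b + d + f + 1 - (n:ℤ)).toNat) := by
      rw [qbinomZ_fact n _ _ (by omega) (by omega) (by omega)]
      have e1 : (2 * f - (b + d + f + 1 - (n:ℤ))).toNat = ((n:ℤ) - 1 - b + f - d).toNat := by
        omega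
      rw [e1]
    have hL2 : qbinomZ n ((b + f - d) + (c + d - e) - z) (b + f - d)
        = qfact n ((b + f - d) + (c + d - e) - z).toNat /
          (qfact n (c + d - e - z).toNat * qfact n (b + f - d).toNat) := by
      rw [qbinomZ_fact n _ _ (by omega) (by omega) (by omega)]
      have e1 : ((b + f - d) + (c + d - e) - z - (b + f - d)).toNat
          = (c + d - e - z).toNat := by omega
      rw [e1]
    have hL3 : qbinomZ n ((d + e - c) + z) (d + f - b)
        = qfact n ((d + e - c) + z).toNat /
          (qfact n ((d + e - c) + z - (d + f - b)).toNat * qfact n (d + f - b).toNat) := by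
      rw [qbinomZ_fact n _ _ (by omega) (by omega) (by omega)]
    have hR1 : qbinomZ n (2 * f) (((n : ℤ) - 1 - b) + d + f + 1 - n)
        = qfact n (2 * f).toNat /
          (qfact n (b + f - d).toNat * qfact n (d + f - b).toNat) := by
      rw [qbinomZ_fact n _ _ (by omega) (by omega) (by omega)]
      have e1 : (2 * f - (((n:ℤ) - 1 - b) + d + f + 1 - n)).toNat = (b + f - d).toNat := by
        omega
      have e2 : (((n:ℤ) - 1 - b) + d + f + 1 - n).toNat = (d + f - b).toNat := by omega
      rw [e1, e2]
    have hR2 : qbinomZ n ((((n : ℤ) - 1 - b) + f - d) + (c + d - e) - z)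
          (((n : ℤ) - 1 - b) + f - d)
        = qfact n ((n:ℤ) - 1 - ((d + e - c) + z - (d + f - b))).toNat /
          (qfact n ((n:ℤ) - 1 - b + f - d).toNat * qfact n (c + d - e - z).toNat) := by
      rw [qbinomZ_fact n _ _ (by omega) (by omega) (by omega)]
      have e0 : ((((n : ℤ) - 1 - b) + f - d) + (c + d - e) - z).toNat
          = ((n:ℤ) - 1 - ((d + e - c) + z - (d + f - b))).toNat := by omega
      have e1 : ((((n : ℤ) - 1 - b) + f - d) + (c + d - e) - z
          - (((n : ℤ) - 1 - b) + f - d)).toNat = (c + d - e - z).toNat := by omega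
      have e2 : (((n : ℤ) - 1 - b) + f - d).toNat = ((n:ℤ) - 1 - b + f - d).toNat := by omega
      rw [e0, e1, e2]
      ring
    have hR3 : qbinomZ n ((d + e - c) + z) (d + f - ((n : ℤ) - 1 - b))
        = qfact n ((d + e - c) + z).toNat /
          (qfact n ((n:ℤ) - 1 - ((b + f - d) + (c + d - e) - z)).toNat *
            qfact n (b + d + f + 1 - (n:ℤ)).toNat) := by
      rw [qbinomZ_fact n _ _ (by omega) (by omega) (by omega)]
      have e1 : ((d + e - c) + z - (d + f - ((n:ℤ) - 1 - b))).toNat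
          = ((n:ℤ) - 1 - ((b + f - d) + (c + d - e) - z)).toNat := by omega
      have e2 : (d + f - ((n:ℤ) - 1 - b)).toNat = (b + d + f + 1 - (n:ℤ)).toNat := by omega
      rw [e1, e2]
    rw [hL1, hL2, hL3, hR1, hR2, hR3]
    have h1 : qfact n ((b + f - d) + (c + d - e) - z).toNat *
        qfact n ((n:ℤ) - 1 - ((b + f - d) + (c + d - e) - z)).toNat = qfact n (n - 1) := by
      have h := qfact_compl n hn ((b + f - d) + (c + d - e) - z).toNat (by omega)
      have e : n - 1 - ((b + f - d) + (c + d - e) - z).toNat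
          = ((n:ℤ) - 1 - ((b + f - d) + (c + d - e) - z)).toNat := by omega
      rw [e] at h
      exact h
    have h2 : qfact n ((d + e - c) + z - (d + f - b)).toNat *
        qfact n ((n:ℤ) - 1 - ((d + e - c) + z - (d + f - b))).toNat = qfact n (n - 1) := by
      have h := qfact_compl n hn ((d + e - c) + z - (d + f - b)).toNat (by omega)
      have e : n - 1 - ((d + e - c) + z - (d + f - b)).toNat
          = ((n:ℤ) - 1 - ((d + e - c) + z - (d + f - b))).toNat := by omega
      rw [e] at h
      exact h
    refine key_alg _ _ _ _ _ _ _ _ _ _ _ _ ?_ ?_ ?_ ?_ ?_ ?_ ?_ h1 h2 <;>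
      exact qfact_ne_zero n _ (by omega)

/-- the `b ↦ n-1-b` invariance of the product of three quantum binomials
appearing in the summand of the deformed 6j-symbol formula. -/
theorem qbinom_triple_bar_b (n : ℕ) (hn : 2 ≤ n) (a b c d e f : ℤ)
    (habc : Admissible n a b c) (hcde : Admissible n c d e)
    (haef : Admissible n a e f) (hbdf : Admissible n b d f) (z : ℤ)
    (hs : max (max 0 ((n : ℤ) - 1 - 2 * e))
        (max ((d + f - b) - (d + e - c)) ((b + f - d) + (c + d - e) - ((n : ℤ) - 1))) ≤ z)
    (hS : z ≤ min (min (c + d - e) (a + f - e))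
        (min ((n : ℤ) - 1 - (a + e - f)) ((n : ℤ) - 1 - (d + e - c)))) :
    qbinomZ n (2 * f) (b + d + f + 1 - n) *
      qbinomZ n ((b + f - d) + (c + d - e) - z) (b + f - d) *
      qbinomZ n ((d + e - c) + z) (d + f - b) =
    qbinomZ n (2 * f) (((n : ℤ) - 1 - b) + d + f + 1 - n) *
      qbinomZ n ((((n : ℤ) - 1 - b) + f - d) + (c + d - e) - z)
        (((n : ℤ) - 1 - b) + f - d) *
      qbinomZ n ((d + e - c) + z) (d + f - ((n : ℤ) - 1 - b)) := by
  obtain ⟨hc1', hc2', hd1, hd2, he1, he2, hcde1, hcde2, hcde3, hcde4, hcde5, hcde6, hcde7,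
    hcde8⟩ := hcde
  obtain ⟨hb1', hb2', hd1', hd2', hf1', hf2'', hbdf1, hbdf2, hbdf3, hbdf4, hbdf5, hbdf6, hbdf7,
    hbdf8⟩ := hbdf
  simp only [max_le_iff] at hs
  simp only [le_min_iff] at hS
  obtain ⟨⟨hz1, hz2⟩, hz3, hz4⟩ := hs
  obtain ⟨⟨hz5, hz6⟩, hz7, hz8⟩ := hS
  exact core n hn b c d e f z hcde3 hcde4 hcde5 hcde6 hbdf1 hbdf2 hbdf3 hbdf4 hbdf5 hbdf6
    hbdf7 hbdf8 hf1' hf2'' hz1 hz3 hz4 hz5 hz8
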